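/- The numerical semigroup generated by two coprime positive integers a and b is symmetric: an integer x lies in the semigroup ⟨a,b⟩ if and only if F - x does not, where F = ab - a - b is the Frobenius number. Equivalently, for every integer x, exactly one of x and ab - a - b - x belongs to ⟨a,b⟩. -/
import Mathlib


/-- The numerical semigroup `⟨a,b⟩` generated by coprime `a, b ≥ 2` is symmetric with
Frobenius number `ab - a - b`. -/
theorem stmt13 (a b : ℕ) (ha : 2 ≤ a) (hb : 2 ≤ b) (hco : Nat.Coprime a b) :
    ∀ x : ℤ, (∃ m n : ℕ, x = m * a + n * b) ↔
      ¬ ∃ m n : ℕ, (a * b - a - b : ℤ) - x = m * a + n * b := by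
  haveI : NeZero a := ⟨by omega⟩
  have hcoZ : IsCoprime (a : ℤ) (b : ℤ) := Nat.isCoprime_iff_coprime.mpr hco
  -- The Frobenius number itself is not representable.
  have notF : ∀ M N : ℕ, (a * b - a - b : ℤ) ≠ M * a + N * b := by
    intro M N h
    have h2 : (a : ℤ) * b = (M + 1) * a + (N + 1) * b := by linarith
    have hdvd : (a : ℤ) ∣ ((N : ℤ) + 1) * b := ⟨(b : ℤ) - (M + 1), by linarith⟩
    have hdvd2 : (a : ℤ) ∣ ((N : ℤ) + 1) := hcoZ.dvd_of_dvd_mul_right hdvd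
    have hge : (a : ℤ) ≤ (N : ℤ) + 1 := Int.le_of_dvd (by positivity) hdvd2
    have hb0 : (0 : ℤ) < b := by exact_mod_cast (by omega : 0 < b)
    have ha0 : (0 : ℤ) < a := by exact_mod_cast (by omega : 0 < a)
    nlinarith
  -- Every integer has a canonical representation with small n.
  have key : ∀ x : ℤ, ∃ (n : ℕ) (m : ℤ), n < a ∧ x = m * a + n * b := by
    intro x
    have hu : IsUnit ((b : ZMod a)) := by
      rw [ZMod.isUnit_iff_coprime]
      exact hco.symm
    set e : ZMod a := (b : ZMod a)⁻¹ * (x : ZMod a) with he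
    have hdvd : (a : ℤ) ∣ x - (e.val : ℤ) * b := by
      have h0 : ((x - (e.val : ℤ) * b : ℤ) : ZMod a) = 0 := by
        push_cast
        rw [ZMod.natCast_val, ZMod.cast_id, he]
        have := ZMod.inv_mul_of_unit _ hu
        calc (x : ZMod a) - (b : ZMod a)⁻¹ * (x : ZMod a) * (b : ZMod a)
            = (x : ZMod a) - ((b : ZMod a)⁻¹ * (b : ZMod a)) * (x : ZMod a) := by ring
          _ = 0 := by rw [this]; ring
      exact (ZMod.intCast_zmod_eq_zero_iff_dvd _ _).mp h0
    refine ⟨e.val, (x - (e.val : ℤ) * b) / a, ZMod.val_lt e, ?_⟩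
    have := Int.ediv_mul_cancel hdvd
    linarith
  intro x
  constructor
  · rintro ⟨m, n, hx⟩ ⟨m', n', hy⟩
    apply notF (m + m') (n + n')
    push_cast
    linarith
  · intro hnot
    obtain ⟨n, m, hn, hx⟩ := key x
    rcases le_or_gt 0 m with hm | hm
    · exact ⟨m.toNat, n, by rw [Int.toNat_of_nonneg hm]; exact hx⟩
    · exfalso
      apply hnot
      refine ⟨(-1 - m).toNat, a - 1 - n, ?_⟩
      have h1 : (((-1 - m).toNat : ℤ)) = -1 - m := Int.toNat_of_nonneg (by omega)
      have h2 : (((a - 1 - n : ℕ)) : ℤ) = (a : ℤ) - 1 - n := by omega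
      rw [h1, h2]
      ring_nf
      ring_nf at hx
      linarith
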